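/- There cannot be two consecutive terms of q: for all n ≥ 1, q(n+1) - q(n) ≥ 2. -/
import Mathlib


/-- Wythoff sequences: `p 1 = 1`, `q n = p n + n` for `n ≥ 1`, and `p (n+1)` is the
smallest positive integer not contained in `U_n = {p 1, …, p n, q 1, …, q n}`. -/

theorem stmt_1 (p q : ℕ → ℕ)
    (hp1 : p 1 = 1)
    (hq : ∀ n, 1 ≤ n → q n = p n + n)
    (hmin : ∀ n, 1 ≤ n →
      IsLeast {m : ℕ | 0 < m ∧ ∀ i, 1 ≤ i → i ≤ n → m ≠ p i ∧ m ≠ q i} (p (n + 1))) :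
    ∀ n, 1 ≤ n → q n + 2 ≤ q (n + 1) := by
  intro n hn
  -- key: p n < p (n+1)
  have key : p n < p (n + 1) := by
    obtain ⟨⟨hpos, hne⟩, _⟩ := hmin n hn
    have hne' : p (n + 1) ≠ p n := (hne n hn le_rfl).1
    rcases Nat.lt_or_ge n 2 with h2 | h2
    · interval_cases n
      · rw [hp1]; omega
    · -- n ≥ 2, so n = m + 1 with m ≥ 1
      obtain ⟨m, rfl⟩ : ∃ m, n = m + 1 := ⟨n - 1, by omega⟩
      have hm : 1 ≤ m := by omega
      obtain ⟨_, hlb⟩ := hmin m hm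
      have hmem : p (m + 1 + 1) ∈ {x : ℕ | 0 < x ∧ ∀ i, 1 ≤ i → i ≤ m → x ≠ p i ∧ x ≠ q i} :=
        ⟨hpos, fun i hi him => hne i hi (by omega)⟩
      have := hlb hmem
      omega
  rw [hq n hn, hq (n + 1) (by omega)]
  omega
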